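/- Let n be a positive integer and let x₁, x₂, x₃, x₄, x₅, x₆, x₇ be nonnegative integers satisfying x₁ + x₂ + x₃ + x₄ + x₅ + x₆ + x₇ = 2n, x₁ + x₄ = x₂ + x₃, x₁ + x₆ = x₂ + x₅, and x₃ + x₆ = x₄ + x₅. Then s₂(x₁) + s₂(x₂) + s₂(x₃) + s₂(x₄) + s₂(x₅) + s₂(x₆) + s₂(x₇) + s₂(x₁ + x₂ + x₇) + s₂(x₃ + x₄ + x₇) + s₂(x₅ + x₆ + x₇) ≥ 3·s₂(n). -/
import Mathlib

/-- `s2 x` is the binary digit sum of `x`: the number of `1`s in its binary expansion. -/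
def s2 (x : ℕ) : ℕ := (Nat.digits 2 x).sum

lemma padicVal2_factorial (n : ℕ) : padicValNat 2 (Nat.factorial n) = n - s2 n := by
  have := @sub_one_mul_padicValNat_factorial 2 ⟨Nat.prime_two⟩ n
  simpa [s2] using this

lemma s2_add_le (a b : ℕ) : s2 (a + b) ≤ s2 a + s2 b := by
  have hdvd : Nat.factorial a * Nat.factorial b ∣ Nat.factorial (a + b) :=
    Nat.factorial_mul_factorial_dvd_factorial_add a b
  obtain ⟨c, hc⟩ := hdvd
  have hc0 : c ≠ 0 := by
    intro h
    rw [h, mul_zero] at hc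
    exact Nat.factorial_ne_zero (a + b) hc
  have key : padicValNat 2 (Nat.factorial a) + padicValNat 2 (Nat.factorial b) ≤
      padicValNat 2 (Nat.factorial (a + b)) := by
    rw [hc, padicValNat.mul (by positivity) hc0,
      padicValNat.mul (Nat.factorial_ne_zero a) (Nat.factorial_ne_zero b)]
    exact Nat.le_add_right _ _
  rw [padicVal2_factorial, padicVal2_factorial, padicVal2_factorial] at key
  have ha := Nat.digit_sum_le 2 a
  have hb := Nat.digit_sum_le 2 b
  have hab := Nat.digit_sum_le 2 (a + b)
  simp only [s2] at *
  omega

lemma s2_two_mul (x : ℕ) : s2 (2 * x) = s2 x := by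
  rcases Nat.eq_zero_or_pos x with h | h
  · simp [h]
  · unfold s2
    rw [Nat.digits_def' (by norm_num : 1 < 2) (by positivity)]
    simp [Nat.mul_div_cancel_left x (by norm_num : 0 < 2)]

lemma s2_split (n m : ℕ) (h : m ≤ n) : s2 n ≤ s2 m + s2 (n - m) := by
  have : n = m + (n - m) := by omega
  calc s2 n = s2 (m + (n - m)) := by rw [← this]
    _ ≤ s2 m + s2 (n - m) := s2_add_le _ _

theorem stmt_8 (n : ℕ) (hn : 0 < n) (x₁ x₂ x₃ x₄ x₅ x₆ x₇ : ℕ)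
    (hsum : x₁ + x₂ + x₃ + x₄ + x₅ + x₆ + x₇ = 2 * n)
    (h1 : x₁ + x₄ = x₂ + x₃) (h2 : x₁ + x₆ = x₂ + x₅) (h3 : x₃ + x₆ = x₄ + x₅) :
    s2 x₁ + s2 x₂ + s2 x₃ + s2 x₄ + s2 x₅ + s2 x₆ + s2 x₇ +
      s2 (x₁ + x₂ + x₇) + s2 (x₃ + x₄ + x₇) + s2 (x₅ + x₆ + x₇) ≥ 3 * s2 n := by
  -- group 1: m₁ = x₃ + x₆, x₁ + x₂ + x₇ = 2 * (n - m₁)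
  set m₁ := x₃ + x₆ with hm₁
  set m₂ := x₂ + x₅ with hm₂
  set m₃ := x₁ + x₄ with hm₃
  have hm₁n : m₁ ≤ n := by omega
  have hm₂n : m₂ ≤ n := by omega
  have hm₃n : m₃ ≤ n := by omega
  have e1 : x₁ + x₂ + x₇ = 2 * (n - m₁) := by omega
  have e2 : x₃ + x₄ + x₇ = 2 * (n - m₂) := by omega
  have e3 : x₅ + x₆ + x₇ = 2 * (n - m₃) := by omega
  have g1 : s2 x₃ + s2 x₆ + s2 (x₁ + x₂ + x₇) ≥ s2 n := by
    have h := s2_add_le x₃ x₆; rw [← hm₁] at h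
    have := s2_split n m₁ hm₁n
    rw [e1, s2_two_mul]
    omega
  have g2 : s2 x₂ + s2 x₅ + s2 (x₃ + x₄ + x₇) ≥ s2 n := by
    have h := s2_add_le x₂ x₅; rw [← hm₂] at h
    have := s2_split n m₂ hm₂n
    rw [e2, s2_two_mul]
    omega
  have g3 : s2 x₁ + s2 x₄ + s2 (x₅ + x₆ + x₇) ≥ s2 n := by
    have h := s2_add_le x₁ x₄; rw [← hm₃] at h
    have := s2_split n m₃ hm₃n
    rw [e3, s2_two_mul]
    omega
  omega
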